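/- arXiv:2506.17889 — 3 statements merged into one kernel-verified Lean document; each statement's English description precedes it below -/
import Mathlib

section
/- Let ε = (ε₁, …, ε_{p−1}) ∈ {±1}^{p−1} and define μ(i) = 1 if ε_i = 1 and μ(i) = t if ε_i = −1 (with μ(0) = 0 by convention), working in the field of rational functions ℚ(x, t) (or the Laurent polynomial ring). Define C₀ = 1, C₁ = μ(1)²/t + x, and C_k = (μ(k)²/t + x)·C_{k−1} − (μ(k−1)μ(k)x/t)·C_{k−2} for k ≥ 2. Let α_k be the number of indices i ≤ k with ε_i = 1 and β_k = k − α_k. Then t^(α_k) · C_k is a polynomial in t of degree k (with coefficients that are Laurent polynomials in x), i.e., C_k = ∑_{i=0}^{k} C_k^i(x) · t^(i−α_k) for some Laurent polynomials C_k^i(x). -/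
open Finset LaurentPolynomial

lemma shift_support (r : LaurentPolynomial ℚ) (s : ℤ)
    (q : LaurentPolynomial (LaurentPolynomial ℚ)) {m : ℤ}
    (hm : m ∈ ((LaurentPolynomial.C r * T s) * q).coeff.support) : ∃ u ∈ q.coeff.support, m = s + u := by
  have h1 := AddMonoidAlgebra.support_coeff_mul_subset (LaurentPolynomial.C r * T s) q hm
  rw [Finset.mem_add] at h1
  obtain ⟨u, hu, v, hv, huv⟩ := h1
  have := support_C_mul_T r s hu
  rw [Finset.mem_singleton] at this
  exact ⟨v, hv, by omega⟩

lemma cmul_support (r : LaurentPolynomial ℚ)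
    (q : LaurentPolynomial (LaurentPolynomial ℚ)) {m : ℤ}
    (hm : m ∈ (LaurentPolynomial.C r * q).coeff.support) : m ∈ q.coeff.support := by
  have h : LaurentPolynomial.C r * q = (LaurentPolynomial.C r * T 0) * q := by
    rw [T_zero, mul_one]
  rw [h] at hm
  obtain ⟨u, hu, hmu⟩ := shift_support _ _ _ hm
  simpa [hmu] using hu

lemma aux_conv (q : LaurentPolynomial (LaurentPolynomial ℚ)) (a n : ℕ)
    (h : ∀ m ∈ q.coeff.support, -(a:ℤ) ≤ m ∧ m ≤ (n:ℤ) - a) :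
    ∃ c : ℕ → LaurentPolynomial ℚ,
      q = ∑ i ∈ Finset.range (n+1), LaurentPolynomial.C (c i) * T ((i:ℤ) - a) := by
  refine ⟨fun i => q.coeff ((i:ℤ) - a), ?_⟩
  have hsub : q.coeff.support ⊆ (Finset.range (n+1)).image (fun i : ℕ => (i:ℤ) - a) := by
    intro m hm
    obtain ⟨h1, h2⟩ := h m hm
    refine Finset.mem_image.2 ⟨(m + a).toNat, Finset.mem_range.2 (by omega), by omega⟩
  have h1 : q = ∑ m ∈ q.coeff.support, AddMonoidAlgebra.single m (q.coeff m) :=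
    (AddMonoidAlgebra.sum_coeff_single q).symm
  conv_lhs => rw [h1, Finset.sum_subset hsub (fun m _ hm => by
    rw [Finsupp.notMem_support_iff.mp hm, AddMonoidAlgebra.single_zero]),
    Finset.sum_image (fun i _ j _ hij => by omega)]
  simp [single_eq_C_mul_T]

/-- Working in the Laurent polynomial ring `ℚ[x,x⁻¹][t,t⁻¹]`, with `t` the outer
variable `T 1` and `x` the inner variable `C (T 1)`. -/
theorem stmt_8 (p : ℕ) (hp : 2 ≤ p)
    (ε : ℕ → ℤ) (hε : ∀ i, 1 ≤ i → i ≤ p - 1 → ε i = 1 ∨ ε i = -1)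
    (μ : ℕ → LaurentPolynomial (LaurentPolynomial ℚ))
    (hμ : ∀ i, μ i = if 1 ≤ i ∧ i ≤ p - 1 then (if ε i = 1 then 1 else T 1) else 0)
    (Cp : ℕ → LaurentPolynomial (LaurentPolynomial ℚ))
    (hC0 : Cp 0 = 1)
    (hC1 : Cp 1 = μ 1 ^ 2 * T (-1) + LaurentPolynomial.C (T 1))
    (hCk : ∀ k, 2 ≤ k → Cp k =
      (μ k ^ 2 * T (-1) + LaurentPolynomial.C (T 1)) * Cp (k - 1) -
      (μ (k - 1) * μ k * LaurentPolynomial.C (T 1) * T (-1)) * Cp (k - 2))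
    (α : ℕ → ℕ) (hα : ∀ k, α k = ((Finset.Icc 1 k).filter (fun i => ε i = 1)).card) :
    ∀ k, k ≤ p - 1 →
      ∃ c : ℕ → LaurentPolynomial ℚ,
        Cp k = ∑ i ∈ Finset.range (k + 1),
          LaurentPolynomial.C (c i) * T ((i : ℤ) - (α k : ℤ)) := by
  have hα0 : α 0 = 0 := by rw [hα]; simp
  have hαs : ∀ j, α (j+1) = α j + (if ε (j+1) = 1 then 1 else 0) := by
    intro j
    rw [hα, hα]
    have hins : Finset.Icc 1 (j+1) = insert (j+1) (Finset.Icc 1 j) := by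
      ext m; simp only [Finset.mem_Icc, Finset.mem_insert]; omega
    have hnot : j+1 ∉ (Finset.Icc 1 j).filter (fun i => ε i = 1) := by
      simp [Finset.mem_filter, Finset.mem_Icc]
    rw [hins, Finset.filter_insert]
    split
    · rw [Finset.card_insert_of_notMem hnot]
    · simp
  have key : ∀ k, k ≤ p - 1 → ∀ m ∈ (Cp k).coeff.support, -(α k:ℤ) ≤ m ∧ m ≤ (k:ℤ) - (α k:ℤ) := by
    intro k
    induction k using Nat.strong_induction_on with
    | _ k ih =>
      match k, ih with
      | 0, _ =>
        intro _ m hm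
        rw [hC0] at hm
        have h1 : (1 : LaurentPolynomial (LaurentPolynomial ℚ)).coeff = Finsupp.single 0 1 := rfl
        rw [h1] at hm
        have := Finsupp.support_single_subset hm
        rw [Finset.mem_singleton] at this
        rw [hα0]; omega
      | 1, _ =>
        intro _ m hm
        have hp1 : 1 ≤ p - 1 := by omega
        rw [hC1, hμ 1, if_pos ⟨le_refl 1, hp1⟩] at hm
        have hTs : ∀ s : ℤ, (T s : LaurentPolynomial (LaurentPolynomial ℚ)).coeff.support ⊆ {s} :=
          fun s => Finsupp.support_single_subset
        have hCx : (LaurentPolynomial.C (T 1) :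
            LaurentPolynomial (LaurentPolynomial ℚ)).coeff.support ⊆ {0} := by
          rw [← single_eq_C]; exact Finsupp.support_single_subset
        rcases hε 1 (le_refl 1) hp1 with he | he
        · rw [if_pos he] at hm
          simp only [one_pow, one_mul] at hm
          rw [AddMonoidAlgebra.coeff_add] at hm
          have := Finsupp.support_add hm
          have hα1 : α 1 = 1 := by
            have h' : α 1 = α 0 + (if ε 1 = 1 then 1 else 0) := hαs 0
            rw [h', hα0, if_pos he]
          rcases Finset.mem_union.mp this with h | h
          · have := hTs (-1) h; rw [Finset.mem_singleton] at this; rw [hα1]; omega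
          · have := hCx h; rw [Finset.mem_singleton] at this; rw [hα1]; omega
        · rw [if_neg (by omega)] at hm
          have hT1 : ((T 1 : LaurentPolynomial (LaurentPolynomial ℚ)))^2 * T (-1) = T 1 := by
            rw [T_pow, ← T_add]; norm_num
          rw [hT1] at hm
          rw [AddMonoidAlgebra.coeff_add] at hm
          have := Finsupp.support_add hm
          have hα1 : α 1 = 0 := by
            have h' : α 1 = α 0 + (if ε 1 = 1 then 1 else 0) := hαs 0
            rw [h', hα0, if_neg (by omega)]
          rcases Finset.mem_union.mp this with h | h
          · have := hTs 1 h; rw [Finset.mem_singleton] at this; rw [hα1]; omega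
          · have := hCx h; rw [Finset.mem_singleton] at this; rw [hα1]; omega
      | (k+2), ih =>
        intro h2 m hm
        have hk1 : k+1 ≤ p - 1 := by omega
        have ih1 := ih (k+1) (by omega) hk1
        have ih0 := ih k (by omega) (by omega)
        obtain ⟨d2, hd2, hμ2, ha2⟩ : ∃ d : ℤ, (d = 0 ∨ d = 1) ∧ μ (k+2) = T d ∧
            (α (k+2) : ℤ) = α (k+1) + 1 - d := by
          have h' : α (k+2) = α (k+1) + (if ε (k+2) = 1 then 1 else 0) := hαs (k+1)
          rcases hε (k+2) (by omega) h2 with h | h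
          · exact ⟨0, Or.inl rfl, by rw [hμ, if_pos ⟨by omega, h2⟩, if_pos h]; simp,
              by rw [h', if_pos h]; push_cast; ring⟩
          · exact ⟨1, Or.inr rfl, by rw [hμ, if_pos ⟨by omega, h2⟩, if_neg (by omega)],
              by rw [h', if_neg (by omega)]; push_cast; ring⟩
        obtain ⟨d1, hd1, hμ1, ha1⟩ : ∃ d : ℤ, (d = 0 ∨ d = 1) ∧ μ (k+1) = T d ∧
            (α (k+1) : ℤ) = α k + 1 - d := by
          have h' : α (k+1) = α k + (if ε (k+1) = 1 then 1 else 0) := hαs k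
          rcases hε (k+1) (by omega) hk1 with h | h
          · exact ⟨0, Or.inl rfl, by rw [hμ, if_pos ⟨by omega, hk1⟩, if_pos h]; simp,
              by rw [h', if_pos h]; push_cast; ring⟩
          · exact ⟨1, Or.inr rfl, by rw [hμ, if_pos ⟨by omega, hk1⟩, if_neg (by omega)],
              by rw [h', if_neg (by omega)]; push_cast; ring⟩
        have hrec : Cp (k+2) =
            (μ (k+2) ^ 2 * T (-1) + LaurentPolynomial.C (T 1)) * Cp (k+1) -
            (μ (k+1) * μ (k+2) * LaurentPolynomial.C (T 1) * T (-1)) * Cp k :=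
          hCk (k+2) (by omega)
        have t1 : ((T d2 : LaurentPolynomial (LaurentPolynomial ℚ)))^2 * T (-1) =
            LaurentPolynomial.C 1 * T (d2 + d2 + -1) := by
          rw [map_one, one_mul, sq, ← T_add, ← T_add]
        have t3 : (T d1 : LaurentPolynomial (LaurentPolynomial ℚ)) * T d2 *
            LaurentPolynomial.C (T 1) * T (-1) =
            LaurentPolynomial.C (T 1) * T (d1 + (d2 + -1)) := by
          rw [T_add, T_add]; ring
        have hdecomp : Cp (k+2) =
            (LaurentPolynomial.C 1 * T (d2 + d2 + -1)) * Cp (k+1) +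
            LaurentPolynomial.C (T 1) * Cp (k+1) -
            (LaurentPolynomial.C (T 1) * T (d1 + (d2 + -1))) * Cp k := by
          rw [hrec, hμ1, hμ2, t1, t3, add_mul]
        rw [hdecomp, AddMonoidAlgebra.coeff_sub, AddMonoidAlgebra.coeff_add] at hm
        rcases Finset.mem_union.mp (Finsupp.support_sub hm) with h | h
        · rcases Finset.mem_union.mp (Finsupp.support_add h) with h' | h'
          · obtain ⟨u, hu, hmu⟩ := shift_support _ _ _ h'
            have := ih1 u hu
            push_cast at this ⊢
            omega
          · have hu := cmul_support _ _ h'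
            have := ih1 m hu
            push_cast at this ⊢
            omega
        · obtain ⟨u, hu, hmu⟩ := shift_support _ _ _ h
          have := ih0 u hu
          push_cast at this ⊢
          omega
  intro k hk
  exact aux_conv (Cp k) (α k) k (key k hk)
end

section
/- With the recursively defined Laurent polynomials C_k(x,t) as above (C₀ = 1, C₁ = μ(1)²/t + x, C_k = (μ(k)²/t + x)C_{k−1} − (μ(k−1)μ(k)x/t)C_{k−2}), writing C_k = ∑_{i=0}^{k} C_k^i(x) t^(i−α_k), the lowest coefficient satisfies C_k^0(x) = x^(β_k) and the highest coefficient satisfies C_k^k(x) = x^(α_k), where α_k is the number of +1 entries and β_k the number of −1 entries among ε₁,…,ε_k. -/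
open Finset LaurentPolynomial

private lemma aux9_single_mul_apply (s : ℤ) (r : LaurentPolynomial ℚ)
    (f : LaurentPolynomial (LaurentPolynomial ℚ)) (n : ℤ) :
    ((AddMonoidAlgebra.single s r) * f).coeff n = r * f.coeff (n - s) := by
  rw [AddMonoidAlgebra.coeff_single_mul_apply]
  ring_nf

private lemma aux9_one_apply (n : ℤ) :
    (1 : LaurentPolynomial (LaurentPolynomial ℚ)).coeff n = if n = 0 then 1 else 0 := by
  rw [← LaurentPolynomial.single_zero_one_eq_one, AddMonoidAlgebra.coeff_single, Finsupp.single_apply]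
  simp [eq_comm]

private lemma aux9_single_apply (s : ℤ) (r : LaurentPolynomial ℚ) (n : ℤ) :
    (AddMonoidAlgebra.single s r : LaurentPolynomial (LaurentPolynomial ℚ)).coeff n
      = if n = s then r else 0 := by
  rw [AddMonoidAlgebra.coeff_single, Finsupp.single_apply]; simp [eq_comm]

private lemma aux9_alpha_succ (ε : ℕ → ℤ) (k : ℕ) :
    ((Icc 1 (k+1)).filter (fun i => ε i = 1)).card
      = ((Icc 1 k).filter (fun i => ε i = 1)).card + (if ε (k+1) = 1 then 1 else 0) := by
  have h : Icc 1 (k+1) = insert (k+1) (Icc 1 k) := by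
    ext i; simp; omega
  rw [h, Finset.filter_insert]
  split
  · rw [Finset.card_insert_of_notMem (by simp)]
  · simp

private lemma aux9_alpha_le (ε : ℕ → ℤ) (k : ℕ) :
    ((Icc 1 k).filter (fun i => ε i = 1)).card ≤ k := by
  calc ((Icc 1 k).filter (fun i => ε i = 1)).card ≤ (Icc 1 k).card :=
        Finset.card_filter_le _ _
  _ = k := by simp

private lemma aux9_C_mul_T (r : LaurentPolynomial ℚ) (m : ℤ) :
    LaurentPolynomial.C r * T m = AddMonoidAlgebra.single m r := by
  exact (single_eq_C_mul_T r m).symm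

/-- Working in the Laurent polynomial ring `ℚ[x,x⁻¹][t,t⁻¹]`, with `t` the outer
variable `T 1` and `x` the inner variable `C (T 1)`: the lowest coefficient of
`C_k` is `x ^ β_k` and the highest is `x ^ α_k`. -/
theorem stmt_9 (p : ℕ) (hp : 2 ≤ p)
    (ε : ℕ → ℤ) (hε : ∀ i, 1 ≤ i → i ≤ p - 1 → ε i = 1 ∨ ε i = -1)
    (μ : ℕ → LaurentPolynomial (LaurentPolynomial ℚ))
    (hμ : ∀ i, μ i = if 1 ≤ i ∧ i ≤ p - 1 then (if ε i = 1 then 1 else T 1) else 0)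
    (Cp : ℕ → LaurentPolynomial (LaurentPolynomial ℚ))
    (hC0 : Cp 0 = 1)
    (hC1 : Cp 1 = μ 1 ^ 2 * T (-1) + LaurentPolynomial.C (T 1))
    (hCk : ∀ k, 2 ≤ k → Cp k =
      (μ k ^ 2 * T (-1) + LaurentPolynomial.C (T 1)) * Cp (k - 1) -
      (μ (k - 1) * μ k * LaurentPolynomial.C (T 1) * T (-1)) * Cp (k - 2))
    (α β : ℕ → ℕ)
    (hα : ∀ k, α k = ((Finset.Icc 1 k).filter (fun i => ε i = 1)).card)
    (hβ : ∀ k, β k = k - α k) :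
    ∀ k, 1 ≤ k → k ≤ p - 1 →
      ∀ c : ℕ → LaurentPolynomial ℚ,
        Cp k = (∑ i ∈ Finset.range (k + 1),
            LaurentPolynomial.C (c i) * T ((i : ℤ) - (α k : ℤ))) →
        c 0 = T (β k : ℤ) ∧ c k = T (α k : ℤ) := by
  have hαle : ∀ m, α m ≤ m := fun m => by rw [hα]; exact aux9_alpha_le ε m
  have hβint : ∀ m, (β m : ℤ) = (m : ℤ) - α m := fun m => by
    have := hαle m; rw [hβ]; omega
  have hstep : ∀ m, (α (m+1) : ℤ) = α m + (if ε (m+1) = 1 then 1 else 0) := by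
    intro m
    rw [hα, hα, aux9_alpha_succ]
    split <;> simp
  -- main induction
  have main : ∀ k, k ≤ p - 1 →
      (∀ n : ℤ, n < -(α k : ℤ) → (Cp k).coeff n = 0) ∧
      (∀ n : ℤ, (k : ℤ) - (α k : ℤ) < n → (Cp k).coeff n = 0) ∧
      (Cp k).coeff (-(α k : ℤ)) = T (β k : ℤ) ∧
      (Cp k).coeff ((k : ℤ) - (α k : ℤ)) = T (α k : ℤ) := by
    intro k
    induction k using Nat.strong_induction_on with
    | _ k ih =>
      match k with
      | 0 =>
        intro _
        have hα0 : α 0 = 0 := by rw [hα]; simp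
        have hβ0 : β 0 = 0 := by rw [hβ, hα0]
        rw [hC0, hα0, hβ0]
        refine ⟨fun n hn => ?_, fun n hn => ?_, ?_, ?_⟩
        · rw [aux9_one_apply, if_neg (by omega)]
        · rw [aux9_one_apply, if_neg (by omega)]
        · simp [aux9_one_apply]
        · simp [aux9_one_apply]
      | 1 =>
        intro hk
        set e1 : ℤ := if ε 1 = 1 then 1 else 0 with he1def
        have he1 : 0 ≤ e1 ∧ e1 ≤ 1 := by rw [he1def]; split <;> norm_num
        have hα1 : (α 1 : ℤ) = e1 := by
          have := hstep 0
          have hα0 : α 0 = 0 := by rw [hα]; simp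
          rw [hα0] at this; simpa using this
        have hμ1 : μ 1 = AddMonoidAlgebra.single (1 - e1) 1 := by
          rcases hε 1 le_rfl (by omega) with h | h <;>
            rw [hμ, if_pos ⟨le_rfl, by omega⟩, he1def] <;> simp [h] <;> rfl
        have hC1' : Cp 1 = AddMonoidAlgebra.single (1 - 2*e1) 1
            + AddMonoidAlgebra.single 0 (T 1) := by
          rw [hC1, hμ1, sq, AddMonoidAlgebra.single_mul_single,
            show (T (-1) : LaurentPolynomial (LaurentPolynomial ℚ))
              = AddMonoidAlgebra.single (-1) 1 from rfl,
            AddMonoidAlgebra.single_mul_single,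
            show (LaurentPolynomial.C (T 1) : LaurentPolynomial (LaurentPolynomial ℚ))
              = AddMonoidAlgebra.single 0 (T 1) from rfl]
          ring_nf
        have happ : ∀ n : ℤ, (Cp 1).coeff n =
            (if n = 1 - 2*e1 then (1:LaurentPolynomial ℚ) else 0)
            + (if n = 0 then (T 1 : LaurentPolynomial ℚ) else 0) := by
          intro n
          rw [hC1', AddMonoidAlgebra.coeff_add, Finsupp.add_apply, aux9_single_apply, aux9_single_apply]
        have hβ1 : (β 1 : ℤ) = 1 - e1 := by rw [hβint]; omega
        refine ⟨fun n hn => ?_, fun n hn => ?_, ?_, ?_⟩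
        · rw [happ, if_neg (by omega), if_neg (by omega)]; simp
        · rw [happ, if_neg (by omega), if_neg (by omega)]; simp
        · rw [happ]
          rcases (by omega : e1 = 0 ∨ e1 = 1) with h | h
          · rw [if_neg (by omega), if_pos (by omega)]
            rw [show (β 1 : ℤ) = 1 by omega]; simp
          · rw [if_pos (by omega), if_neg (by omega)]
            rw [show (β 1 : ℤ) = 0 by omega]; simp [T_zero]
        · rw [happ]
          rcases (by omega : e1 = 0 ∨ e1 = 1) with h | h
          · rw [if_pos (by omega), if_neg (by omega)]
            rw [show (α 1 : ℤ) = 0 by omega]; simp [T_zero]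
          · rw [if_neg (by omega), if_pos (by omega)]
            rw [show (α 1 : ℤ) = 1 by omega]; simp
      | (k+2) =>
        intro hk
        obtain ⟨L1, H1, lo1, hi1⟩ := ih (k+1) (by omega) (by omega)
        obtain ⟨L0, H0, lo0, hi0⟩ := ih k (by omega) (by omega)
        set e1 : ℤ := if ε (k+1) = 1 then 1 else 0 with he1def
        set e2 : ℤ := if ε (k+2) = 1 then 1 else 0 with he2def
        have he1 : 0 ≤ e1 ∧ e1 ≤ 1 := by rw [he1def]; split <;> norm_num
        have he2 : 0 ≤ e2 ∧ e2 ≤ 1 := by rw [he2def]; split <;> norm_num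
        have hA1 : (α (k+1) : ℤ) = α k + e1 := hstep k
        have hA2 : (α (k+2) : ℤ) = α (k+1) + e2 := hstep (k+1)
        have hμ1 : μ (k+1) = AddMonoidAlgebra.single (1 - e1) 1 := by
          rcases hε (k+1) (by omega) (by omega) with h | h <;>
            rw [hμ, if_pos ⟨by omega, by omega⟩, he1def] <;> simp [h] <;> rfl
        have hμ2 : μ (k+2) = AddMonoidAlgebra.single (1 - e2) 1 := by
          rcases hε (k+2) (by omega) (by omega) with h | h <;>
            rw [hμ, if_pos ⟨by omega, by omega⟩, he2def] <;> simp [h] <;> rfl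
        have hrec := hCk (k+2) (by omega)
        rw [show k+2-1 = k+1 from rfl, show k+2-2 = k from rfl] at hrec
        have hT1 : (T (-1) : LaurentPolynomial (LaurentPolynomial ℚ))
            = AddMonoidAlgebra.single (-1) 1 := rfl
        have hCx : (LaurentPolynomial.C (T 1) : LaurentPolynomial (LaurentPolynomial ℚ))
            = AddMonoidAlgebra.single 0 (T 1) := rfl
        have h1 : μ (k+2) ^ 2 * T (-1) = AddMonoidAlgebra.single (1 - 2*e2) 1 := by
          rw [hμ2, sq, AddMonoidAlgebra.single_mul_single, hT1,
            AddMonoidAlgebra.single_mul_single]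
          ring_nf
        have h2 : μ (k+1) * μ (k+2) * LaurentPolynomial.C (T 1) * T (-1)
            = AddMonoidAlgebra.single (1 - e1 - e2) (T 1) := by
          rw [hμ1, hμ2, AddMonoidAlgebra.single_mul_single, hCx,
            AddMonoidAlgebra.single_mul_single, hT1,
            AddMonoidAlgebra.single_mul_single]
          ring_nf
        rw [h1, h2] at hrec
        have hcoeff : ∀ n : ℤ, (Cp (k+2)).coeff n =
            (Cp (k+1)).coeff (n - (1 - 2*e2)) + T 1 * (Cp (k+1)).coeff n
              - T 1 * (Cp k).coeff (n - (1 - e1 - e2)) := by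
          intro n
          rw [hrec, add_mul]
          have : ∀ f g h : LaurentPolynomial (LaurentPolynomial ℚ),
              (f + g - h).coeff n = f.coeff n + g.coeff n - h.coeff n := fun _ _ _ => rfl
          rw [this, aux9_single_mul_apply, aux9_single_mul_apply, hCx,
            aux9_single_mul_apply, sub_zero, one_mul]
        refine ⟨fun n hn => ?_, fun n hn => ?_, ?_, ?_⟩
        · rw [hcoeff, L1 _ (by omega), L1 _ (by omega), L0 _ (by omega)]
          simp
        · rw [hcoeff, H1 _ (by omega), H1 _ (by omega), H0 _ (by omega)]
          simp
        · rw [hcoeff]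
          have hL0 : T 1 * (Cp k).coeff (-(α (k+2):ℤ) - (1 - e1 - e2)) = 0 := by
            rw [L0 _ (by omega), mul_zero]
          have hβeq : (β (k+2) : ℤ) = β (k+1) + (1 - e2) := by
            rw [hβint, hβint]; omega
          rcases (by omega : e2 = 0 ∨ e2 = 1) with h | h
          · rw [hL0, L1 _ (by omega),
              show -(α (k+2):ℤ) = -(α (k+1):ℤ) by omega, lo1]
            rw [← T_add, show (1 : ℤ) + β (k+1) = β (k+2) by omega]
            simp
          · rw [hL0, L1 (-(α (k+2):ℤ)) (by omega),
              show -(α (k+2):ℤ) - (1 - 2*e2) = -(α (k+1):ℤ) by omega, lo1]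
            rw [show (β (k+2) : ℤ) = β (k+1) by omega]
            simp
        · rw [hcoeff]
          have hL0 : T 1 * (Cp k).coeff (((k+2:ℕ):ℤ) - (α (k+2):ℤ) - (1 - e1 - e2)) = 0 := by
            rw [H0 _ (by push_cast; omega), mul_zero]
          rcases (by omega : e2 = 0 ∨ e2 = 1) with h | h
          · rw [hL0, H1 (((k+2:ℕ):ℤ) - (α (k+2):ℤ)) (by push_cast; omega),
              show ((k+2:ℕ):ℤ) - (α (k+2):ℤ) - (1 - 2*e2) = ((k+1:ℕ):ℤ) - (α (k+1):ℤ) by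
                push_cast; omega,
              hi1, show (α (k+2) : ℤ) = (α (k+1) : ℤ) by omega]
            simp
          · rw [hL0, H1 (((k+2:ℕ):ℤ) - (α (k+2):ℤ) - (1 - 2*e2)) (by push_cast; omega),
              show ((k+2:ℕ):ℤ) - (α (k+2):ℤ) = ((k+1:ℕ):ℤ) - (α (k+1):ℤ) by
                push_cast; omega,
              hi1, ← T_add, show (1 : ℤ) + α (k+1) = α (k+2) by omega]
            simp
  -- extraction
  intro k hk1 hkp c hsum
  obtain ⟨-, -, lo, hi⟩ := main k hkp
  have hsum' : ∀ j : ℤ, (Cp k).coeff j = ∑ i ∈ Finset.range (k+1),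
      (AddMonoidAlgebra.single ((i:ℤ) - (α k : ℤ)) (c i)
        : LaurentPolynomial (LaurentPolynomial ℚ)).coeff j := by
    intro j
    rw [hsum]
    simp_rw [aux9_C_mul_T]
    rw [AddMonoidAlgebra.coeff_sum]
    exact Finsupp.finset_sum_apply _ _ _
  constructor
  · have h0 := hsum' (-(α k : ℤ))
    rw [lo, Finset.sum_eq_single 0] at h0
    · rw [h0, aux9_single_apply, if_pos (by omega)]
    · intro i hi hne
      rw [aux9_single_apply, if_neg (by simp at hi; omega)]
    · intro h; exact absurd (Finset.mem_range.mpr (by omega)) h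
  · have h0 := hsum' ((k:ℤ) - (α k : ℤ))
    rw [hi, Finset.sum_eq_single k] at h0
    · rw [h0, aux9_single_apply, if_pos (by omega)]
    · intro i hi hne
      rw [aux9_single_apply, if_neg (by simp at hi; omega)]
    · intro h; exact absurd (Finset.mem_range.mpr (by omega)) h
end

section
/- With the recursively defined C_k(x,t) as above, writing C_k = ∑_{i=0}^{k} C_k^i(x) t^(i−α_k), the second-lowest coefficient satisfies C_k^1(x) = (A_k x − γ_k + B_k/x) · x^(β_k), where A_k and B_k are the numbers of maximal blocks of consecutive +1's and consecutive −1's respectively among ε₁,…,ε_k, and γ_k = A_k + B_k − 1 is the number of sign changes in (ε₁,…,ε_k). -/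
open LaurentPolynomial Finset

section CoAPI
variable {R : Type*} [CommRing R]

/-- coefficient of a Laurent polynomial -/
def lco (P : LaurentPolynomial R) (d : ℤ) : R := (P : AddMonoidAlgebra R ℤ).coeff d

lemma lco_add (P Q : LaurentPolynomial R) (d : ℤ) : lco (P + Q) d = lco P d + lco Q d :=
  Finsupp.add_apply _ _ _

lemma lco_sub (P Q : LaurentPolynomial R) (d : ℤ) : lco (P - Q) d = lco P d - lco Q d :=
  Finsupp.sub_apply _ _ _

lemma lco_T_mul (n d : ℤ) (P : LaurentPolynomial R) : lco (T n * P) d = lco P (d - n) := by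
  show ((AddMonoidAlgebra.single n (1:R)) * (P : AddMonoidAlgebra R ℤ)).coeff d = _
  rw [AddMonoidAlgebra.coeff_single_mul_apply]
  simp [lco, sub_eq_neg_add]

lemma lco_C_mul (r : R) (P : LaurentPolynomial R) (d : ℤ) : lco (C r * P) d = r * lco P d := by
  show ((AddMonoidAlgebra.single (0:ℤ) r) * (P : AddMonoidAlgebra R ℤ)).coeff d = _
  rw [AddMonoidAlgebra.coeff_single_mul_apply]
  simp [lco]

lemma lco_CT_mul (r : R) (n d : ℤ) (P : LaurentPolynomial R) :
    lco (C r * T n * P) d = r * lco P (d - n) := by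
  rw [mul_assoc, lco_C_mul, lco_T_mul]

lemma lco_one (d : ℤ) : lco (1 : LaurentPolynomial R) d = if d = 0 then 1 else 0 := by
  show (AddMonoidAlgebra.single (0:ℤ) (1:R)).coeff d = _
  rw [AddMonoidAlgebra.coeff_single, Finsupp.single_apply]; simp [eq_comm]

lemma lco_CT (n d : ℤ) (r : R) : lco (C r * T n) d = if d = n then r else 0 := by
  rw [← single_eq_C_mul_T]
  show Finsupp.single n r d = _
  rw [Finsupp.single_apply]; simp [eq_comm]

lemma lco_C (r : R) (d : ℤ) : lco (C r : LaurentPolynomial R) d = if d = 0 then r else 0 := by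
  rw [← mul_one (C r), ← T_zero, lco_CT]

lemma lco_T (n d : ℤ) : lco (T n : LaurentPolynomial R) d = if d = n then 1 else 0 := by
  rw [← one_mul (T n), ← map_one LaurentPolynomial.C, lco_CT]

lemma lco_sum {ι : Type*} (s : Finset ι) (f : ι → LaurentPolynomial R) (d : ℤ) :
    lco (∑ i ∈ s, f i) d = ∑ i ∈ s, lco (f i) d := by
  show ((∑ i ∈ s, f i : LaurentPolynomial R) : AddMonoidAlgebra R ℤ).coeff d = _
  rw [AddMonoidAlgebra.coeff_sum]
  exact Finsupp.finset_sum_apply s (fun i => (f i : AddMonoidAlgebra R ℤ).coeff) d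

end CoAPI

lemma icc_filter_step (k : ℕ) (hk : 1 ≤ k) (P : ℕ → Prop) [DecidablePred P] :
    ((Finset.Icc 1 k).filter P).card =
    ((Finset.Icc 1 (k-1)).filter P).card + (if P k then 1 else 0) := by
  obtain ⟨m, rfl⟩ : ∃ m, k = m + 1 := ⟨k - 1, by omega⟩
  rw [← Finset.Ico_add_one_right_eq_Icc, ← Finset.insert_Ico_right_eq_Ico_add_one (by omega), Finset.Ico_add_one_right_eq_Icc,
    Finset.filter_insert]
  simp only [Nat.add_sub_cancel]
  split
  · rw [Finset.card_insert_of_notMem (by simp)]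
  · rw [add_zero]

lemma ico_filter_step (k : ℕ) (hk : 2 ≤ k) (P : ℕ → Prop) [DecidablePred P] :
    ((Finset.Ico 1 k).filter P).card =
    ((Finset.Ico 1 (k-1)).filter P).card + (if P (k-1) then 1 else 0) := by
  obtain ⟨m, rfl⟩ : ∃ m, k = m + 1 := ⟨k - 1, by omega⟩
  rw [Nat.Ico_succ_right_eq_insert_Ico (by omega), Finset.filter_insert]
  simp only [Nat.add_sub_cancel]
  split
  · rw [Finset.card_insert_of_notMem (by simp)]
  · rw [add_zero]

/-- Working in the Laurent polynomial ring `ℚ[x,x⁻¹][t,t⁻¹]`, with `t` the outer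
variable `T 1` and `x` the inner variable `C (T 1)`: the second-lowest coefficient
of `C_k` is `(A_k x - γ_k + B_k x⁻¹) x ^ β_k`, where `A_k`, `B_k` count maximal
blocks of `+1`'s and `-1`'s and `γ_k` counts sign changes among `ε₁, …, ε_k`. -/
theorem stmt_10 (p : ℕ) (hp : 2 ≤ p)
    (ε : ℕ → ℤ) (hε : ∀ i, 1 ≤ i → i ≤ p - 1 → ε i = 1 ∨ ε i = -1)
    (μ : ℕ → LaurentPolynomial (LaurentPolynomial ℚ))
    (hμ : ∀ i, μ i = if 1 ≤ i ∧ i ≤ p - 1 then (if ε i = 1 then 1 else T 1) else 0)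
    (Cp : ℕ → LaurentPolynomial (LaurentPolynomial ℚ))
    (hC0 : Cp 0 = 1)
    (hC1 : Cp 1 = μ 1 ^ 2 * T (-1) + LaurentPolynomial.C (T 1))
    (hCk : ∀ k, 2 ≤ k → Cp k =
      (μ k ^ 2 * T (-1) + LaurentPolynomial.C (T 1)) * Cp (k - 1) -
      (μ (k - 1) * μ k * LaurentPolynomial.C (T 1) * T (-1)) * Cp (k - 2))
    (α β A B γ : ℕ → ℕ)
    (hα : ∀ k, α k = ((Finset.Icc 1 k).filter (fun i => ε i = 1)).card)
    (hβ : ∀ k, β k = k - α k)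
    (hA : ∀ k, A k = ((Finset.Icc 1 k).filter
      (fun i => ε i = 1 ∧ (i = 1 ∨ ε (i - 1) = -1))).card)
    (hB : ∀ k, B k = ((Finset.Icc 1 k).filter
      (fun i => ε i = -1 ∧ (i = 1 ∨ ε (i - 1) = 1))).card)
    (hγ : ∀ k, γ k = ((Finset.Ico 1 k).filter (fun i => ε i ≠ ε (i + 1))).card) :
    ∀ k, 1 ≤ k → k ≤ p - 1 →
      ∀ c : ℕ → LaurentPolynomial ℚ,
        Cp k = (∑ i ∈ Finset.range (k + 1),
            LaurentPolynomial.C (c i) * T ((i : ℤ) - (α k : ℤ))) →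
        c 1 = ((A k : LaurentPolynomial ℚ) * T 1 - (γ k : LaurentPolynomial ℚ) +
            (B k : LaurentPolynomial ℚ) * T (-1)) * T (β k : ℤ) := by
  have huv : (T 1 * T (-1) : LaurentPolynomial ℚ) = 1 := by
    rw [← T_add]; norm_num [T_zero]
  have hα0 : α 0 = 0 := by simp [hα]
  have hαle : ∀ k, α k ≤ k := by
    intro k
    rw [hα]
    exact (Finset.card_filter_le _ _).trans (by simp [Nat.card_Icc])
  have hαstep : ∀ k, 1 ≤ k → α k = α (k-1) + (if ε k = 1 then 1 else 0) := by
    intro k hk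
    rw [hα, hα, icc_filter_step k hk]
  have key : ∀ k, k ≤ p - 1 →
      (∀ d : ℤ, d < -(α k : ℤ) → lco (Cp k) d = 0) ∧
      lco (Cp k) (-(α k : ℤ)) = T (β k : ℤ) ∧
      (1 ≤ k → lco (Cp k) (1 - (α k : ℤ)) =
        ((A k : LaurentPolynomial ℚ) * T 1 - (γ k : LaurentPolynomial ℚ) +
         (B k : LaurentPolynomial ℚ) * T (-1)) * T (β k : ℤ)) := by
    have houter : (T 1 * T (-1) : LaurentPolynomial (LaurentPolynomial ℚ)) = 1 := by
      rw [← T_add]; norm_num [T_zero]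
    intro k
    induction k using Nat.strong_induction_on with
    | _ k ih =>
    intro hkp
    have hk012 : k = 0 ∨ k = 1 ∨ 2 ≤ k := by omega
    rcases hk012 with rfl | rfl | hk2
    · -- k = 0
      refine ⟨fun d hd => ?_, ?_, fun h => by omega⟩
      · rw [hC0, lco_one, if_neg (by omega)]
      · have hb0 : ((β 0 : ℕ) : ℤ) = 0 := by have := hβ 0; omega
        rw [hC0, lco_one, if_pos (by omega), hb0, T_zero]
    · -- k = 1
      have hp1 : (1:ℕ) ≤ p - 1 := hkp
      have hμ1 : μ 1 = if ε 1 = 1 then 1 else T 1 := by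
        rw [hμ, if_pos ⟨le_rfl, hp1⟩]
      have hα1 : α 1 = if ε 1 = 1 then 1 else 0 := by
        rw [hαstep 1 le_rfl]; simp [hα0]
      have hA1 : A 1 = if ε 1 = 1 then 1 else 0 := by
        rw [hA, Finset.Icc_self, Finset.filter_singleton]
        split
        · rename_i h
          rw [if_pos h.1, Finset.card_singleton]
        · rename_i h
          rw [if_neg (fun h1 => h ⟨h1, Or.inl rfl⟩), Finset.card_empty]
      have hB1 : B 1 = if ε 1 = -1 then 1 else 0 := by
        rw [hB, Finset.Icc_self, Finset.filter_singleton]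
        split
        · rename_i h
          rw [if_pos h.1, Finset.card_singleton]
        · rename_i h
          rw [if_neg (fun h1 => h ⟨h1, Or.inl rfl⟩), Finset.card_empty]
      have hγ1 : γ 1 = 0 := by simp [hγ]
      rcases hε 1 le_rfl hp1 with h1 | h1
      · -- ε 1 = 1
        have hc : Cp 1 = T (-1) + LaurentPolynomial.C (T 1) := by
          rw [hC1, hμ1, if_pos h1, one_pow, one_mul]
        have hα1' : α 1 = 1 := by rw [hα1, if_pos h1]
        have hβ1 : β 1 = 0 := by have := hβ 1; omega
        refine ⟨fun d hd => ?_, ?_, fun _ => ?_⟩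
        · rw [hc, lco_add, lco_T, lco_C, if_neg (by omega), if_neg (by omega), add_zero]
        · rw [hc, lco_add, lco_T, lco_C, if_pos (by omega), if_neg (by omega),
            show ((β 1 : ℕ):ℤ) = 0 by omega, T_zero, add_zero]
        · rw [hc, lco_add, lco_T, lco_C, if_neg (by omega), if_pos (by omega),
            hA1, if_pos h1, hB1, if_neg (by rw [h1]; norm_num), hγ1, hβ1]
          push_cast
          rw [T_zero]
          ring
      · -- ε 1 = -1
        have hc : Cp 1 = T 1 + LaurentPolynomial.C (T 1) := by
          rw [hC1, hμ1, if_neg (by rw [h1]; norm_num)]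
          congr 1
          rw [T_pow, ← T_add]
          norm_num
        have hα1' : α 1 = 0 := by rw [hα1, if_neg (by rw [h1]; norm_num)]
        have hβ1 : β 1 = 1 := by have := hβ 1; omega
        refine ⟨fun d hd => ?_, ?_, fun _ => ?_⟩
        · rw [hc, lco_add, lco_T, lco_C, if_neg (by omega), if_neg (by omega), add_zero]
        · rw [hc, lco_add, lco_T, lco_C, if_neg (by omega), if_pos (by omega),
            show ((β 1 : ℕ):ℤ) = 1 by omega, zero_add]
        · rw [hc, lco_add, lco_T, lco_C, if_pos (by omega), if_neg (by omega),
            hA1, if_neg (by rw [h1]; norm_num), hB1, if_pos h1, hγ1, hβ1]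
          push_cast
          linear_combination -huv
    · -- 2 ≤ k
      have hk1p : k - 1 ≤ p - 1 := by omega
      have hk2p : k - 2 ≤ p - 1 := by omega
      obtain ⟨v1, a1, b1⟩ := ih (k-1) (by omega) hk1p
      obtain ⟨v2, a2, -⟩ := ih (k-2) (by omega) hk2p
      have hb1 := b1 (by omega)
      have hek := hε k (by omega) hkp
      have hek1 := hε (k-1) (by omega) hk1p
      have hμk : μ k = if ε k = 1 then 1 else T 1 := by
        rw [hμ, if_pos ⟨by omega, hkp⟩]
      have hμk1 : μ (k-1) = if ε (k-1) = 1 then 1 else T 1 := by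
        rw [hμ, if_pos ⟨by omega, hk1p⟩]
      have hαk := hαstep k (by omega)
      have hαk1 : α (k-1) = α (k-2) + (if ε (k-1) = 1 then 1 else 0) := by
        have := hαstep (k-1) (by omega)
        rwa [show k - 1 - 1 = k - 2 by omega] at this
      have hβk := hβ k
      have hβk1 := hβ (k-1)
      have hβk2 := hβ (k-2)
      have hle1 := hαle (k-1)
      have hle2 := hαle (k-2)
      have hAk : A k = A (k-1) + (if ε k = 1 ∧ ε (k-1) = -1 then 1 else 0) := by
        rw [hA, hA, icc_filter_step k (by omega)]
        congr 1
        exact if_congr (by simp [show k ≠ 1 by omega]) rfl rfl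
      have hBk : B k = B (k-1) + (if ε k = -1 ∧ ε (k-1) = 1 then 1 else 0) := by
        rw [hB, hB, icc_filter_step k (by omega)]
        congr 1
        exact if_congr (by simp [show k ≠ 1 by omega]) rfl rfl
      have hγk : γ k = γ (k-1) + (if ε (k-1) ≠ ε k then 1 else 0) := by
        rw [hγ, hγ, ico_filter_step k hk2]
        congr 1
        exact if_congr (by rw [show k - 1 + 1 = k by omega]) rfl rfl
      rcases hek with he2 | he2 <;> rcases hek1 with he1 | he1
      · -- ε k = 1, ε (k-1) = 1
        rw [if_pos he2] at hαk
        rw [if_pos he1] at hαk1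
        rw [if_neg (by simp [he1])] at hAk
        rw [if_neg (by simp [he2])] at hBk
        rw [if_neg (by simp [he1, he2])] at hγk
        have hrec : ∀ d, lco (Cp k) d =
            lco (Cp (k-1)) (d+1) + T 1 * lco (Cp (k-1)) d - T 1 * lco (Cp (k-2)) (d+1) := by
          intro d
          rw [hCk k (by omega), hμk, if_pos he2, hμk1, if_pos he1]
          simp only [one_pow, one_mul, add_mul, lco_sub, lco_add, lco_T_mul, lco_C_mul,
            lco_CT_mul, sub_neg_eq_add]
        refine ⟨fun d hd => ?_, ?_, fun _ => ?_⟩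
        · rw [hrec d, v1 _ (by omega), v1 _ (by omega), v2 _ (by omega)]; ring
        · have e1 : lco (Cp (k-1)) (-((α k : ℕ):ℤ) + 1) = T ((β (k-1) : ℕ):ℤ) := by
            rw [show -((α k : ℕ):ℤ) + 1 = -((α (k-1) : ℕ):ℤ) by omega]; exact a1
          rw [hrec, e1, v1 _ (by omega), v2 _ (by omega),
            show ((β (k-1) : ℕ):ℤ) = ((β k : ℕ):ℤ) by omega]
          ring
        · have e1 : lco (Cp (k-1)) (1 - ((α k : ℕ):ℤ) + 1) =
              ((A (k-1) : LaurentPolynomial ℚ) * T 1 - (γ (k-1) : LaurentPolynomial ℚ) +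
               (B (k-1) : LaurentPolynomial ℚ) * T (-1)) * T ((β (k-1) : ℕ):ℤ) := by
            rw [show 1 - ((α k : ℕ):ℤ) + 1 = 1 - ((α (k-1) : ℕ):ℤ) by omega]; exact hb1
          have e2 : lco (Cp (k-1)) (1 - ((α k : ℕ):ℤ)) = T ((β (k-1) : ℕ):ℤ) := by
            rw [show 1 - ((α k : ℕ):ℤ) = -((α (k-1) : ℕ):ℤ) by omega]; exact a1
          have e3 : lco (Cp (k-2)) (1 - ((α k : ℕ):ℤ) + 1) = T ((β (k-2) : ℕ):ℤ) := by
            rw [show 1 - ((α k : ℕ):ℤ) + 1 = -((α (k-2) : ℕ):ℤ) by omega]; exact a2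
          rw [hrec, e1, e2, e3, hAk, hBk, hγk,
            show ((β (k-2) : ℕ):ℤ) = ((β (k-1) : ℕ):ℤ) by omega,
            show ((β k : ℕ):ℤ) = ((β (k-1) : ℕ):ℤ) by omega]
          ring
      · -- ε k = 1, ε (k-1) = -1
        rw [if_pos he2] at hαk
        rw [if_neg (by rw [he1]; norm_num)] at hαk1
        rw [if_pos ⟨he2, he1⟩] at hAk
        rw [if_neg (by simp [he2])] at hBk
        rw [if_pos (by rw [he1, he2]; norm_num)] at hγk
        have eS : μ (k-1) * μ k * LaurentPolynomial.C (T 1) * T (-1)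
            = LaurentPolynomial.C (T 1) := by
          rw [hμk, if_pos he2, hμk1, if_neg (by rw [he1]; norm_num), mul_one]
          linear_combination (LaurentPolynomial.C (T 1) : LaurentPolynomial (LaurentPolynomial ℚ)) * houter
        have hrec : ∀ d, lco (Cp k) d =
            lco (Cp (k-1)) (d+1) + T 1 * lco (Cp (k-1)) d - T 1 * lco (Cp (k-2)) d := by
          intro d
          rw [hCk k (by omega), eS, hμk, if_pos he2]
          simp only [one_pow, one_mul, add_mul, lco_sub, lco_add, lco_T_mul, lco_C_mul,
            lco_CT_mul, sub_neg_eq_add]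
        refine ⟨fun d hd => ?_, ?_, fun _ => ?_⟩
        · rw [hrec d, v1 _ (by omega), v1 _ (by omega), v2 _ (by omega)]; ring
        · have e1 : lco (Cp (k-1)) (-((α k : ℕ):ℤ) + 1) = T ((β (k-1) : ℕ):ℤ) := by
            rw [show -((α k : ℕ):ℤ) + 1 = -((α (k-1) : ℕ):ℤ) by omega]; exact a1
          rw [hrec, e1, v1 _ (by omega), v2 _ (by omega),
            show ((β (k-1) : ℕ):ℤ) = ((β k : ℕ):ℤ) by omega]
          ring
        · have e1 : lco (Cp (k-1)) (1 - ((α k : ℕ):ℤ) + 1) =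
              ((A (k-1) : LaurentPolynomial ℚ) * T 1 - (γ (k-1) : LaurentPolynomial ℚ) +
               (B (k-1) : LaurentPolynomial ℚ) * T (-1)) * T ((β (k-1) : ℕ):ℤ) := by
            rw [show 1 - ((α k : ℕ):ℤ) + 1 = 1 - ((α (k-1) : ℕ):ℤ) by omega]; exact hb1
          have e2 : lco (Cp (k-1)) (1 - ((α k : ℕ):ℤ)) = T ((β (k-1) : ℕ):ℤ) := by
            rw [show 1 - ((α k : ℕ):ℤ) = -((α (k-1) : ℕ):ℤ) by omega]; exact a1
          have e3 : lco (Cp (k-2)) (1 - ((α k : ℕ):ℤ)) = T ((β (k-2) : ℕ):ℤ) := by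
            rw [show 1 - ((α k : ℕ):ℤ) = -((α (k-2) : ℕ):ℤ) by omega]; exact a2
          have hw1 : (T 1 : LaurentPolynomial ℚ) * T ((β (k-2) : ℕ):ℤ) = T ((β (k-1) : ℕ):ℤ) := by
            rw [← T_add]; congr 1; omega
          rw [hrec, e1, e2, e3, hw1, hAk, hBk, hγk,
            show ((β k : ℕ):ℤ) = ((β (k-1) : ℕ):ℤ) by omega]
          push_cast
          ring
      · -- ε k = -1, ε (k-1) = 1
        rw [if_neg (by rw [he2]; norm_num)] at hαk
        rw [if_pos he1] at hαk1
        rw [if_neg (by simp [he2])] at hAk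
        rw [if_pos ⟨he2, he1⟩] at hBk
        rw [if_pos (by rw [he1, he2]; norm_num)] at hγk
        have eT : μ k ^ 2 * T (-1) = (T 1 : LaurentPolynomial (LaurentPolynomial ℚ)) := by
          rw [hμk, if_neg (by rw [he2]; norm_num), T_pow, ← T_add]
          norm_num
        have eS : μ (k-1) * μ k * LaurentPolynomial.C (T 1) * T (-1)
            = LaurentPolynomial.C (T 1) := by
          rw [hμk, if_neg (by rw [he2]; norm_num), hμk1, if_pos he1, one_mul]
          linear_combination (LaurentPolynomial.C (T 1) : LaurentPolynomial (LaurentPolynomial ℚ)) * houter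
        have hrec : ∀ d, lco (Cp k) d =
            lco (Cp (k-1)) (d-1) + T 1 * lco (Cp (k-1)) d - T 1 * lco (Cp (k-2)) d := by
          intro d
          rw [hCk k (by omega), eT, eS]
          simp only [add_mul, lco_sub, lco_add, lco_T_mul, lco_C_mul]
        refine ⟨fun d hd => ?_, ?_, fun _ => ?_⟩
        · rw [hrec d, v1 _ (by omega), v1 _ (by omega), v2 _ (by omega)]; ring
        · have hw2 : (T 1 : LaurentPolynomial ℚ) * T ((β (k-1) : ℕ):ℤ) = T ((β k : ℕ):ℤ) := by
            rw [← T_add]; congr 1; omega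
          rw [hrec, v1 _ (by omega), v2 _ (by omega),
            show -((α k : ℕ):ℤ) = -((α (k-1) : ℕ):ℤ) by omega, a1, hw2]
          ring
        · have e1 : lco (Cp (k-1)) (1 - ((α k : ℕ):ℤ) - 1) = T ((β (k-1) : ℕ):ℤ) := by
            rw [show 1 - ((α k : ℕ):ℤ) - 1 = -((α (k-1) : ℕ):ℤ) by omega]; exact a1
          have e2 : lco (Cp (k-1)) (1 - ((α k : ℕ):ℤ)) =
              ((A (k-1) : LaurentPolynomial ℚ) * T 1 - (γ (k-1) : LaurentPolynomial ℚ) +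
               (B (k-1) : LaurentPolynomial ℚ) * T (-1)) * T ((β (k-1) : ℕ):ℤ) := by
            rw [show 1 - ((α k : ℕ):ℤ) = 1 - ((α (k-1) : ℕ):ℤ) by omega]; exact hb1
          have e3 : lco (Cp (k-2)) (1 - ((α k : ℕ):ℤ)) = T ((β (k-2) : ℕ):ℤ) := by
            rw [show 1 - ((α k : ℕ):ℤ) = -((α (k-2) : ℕ):ℤ) by omega]; exact a2
          have hw2 : (T 1 : LaurentPolynomial ℚ) * T ((β (k-1) : ℕ):ℤ) = T ((β k : ℕ):ℤ) := by
            rw [← T_add]; congr 1; omega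
          rw [hrec, e1, e2, e3, hAk, hBk, hγk,
            show ((β (k-2) : ℕ):ℤ) = ((β (k-1) : ℕ):ℤ) by omega, ← hw2]
          push_cast
          linear_combination -(T ((β (k-1) : ℕ):ℤ) : LaurentPolynomial ℚ) * huv
      · -- ε k = -1, ε (k-1) = -1
        rw [if_neg (by rw [he2]; norm_num)] at hαk
        rw [if_neg (by rw [he1]; norm_num)] at hαk1
        rw [if_neg (by simp [he2])] at hAk
        rw [if_neg (by simp [he1])] at hBk
        rw [if_neg (by simp [he1, he2])] at hγk
        have eT : μ k ^ 2 * T (-1) = (T 1 : LaurentPolynomial (LaurentPolynomial ℚ)) := by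
          rw [hμk, if_neg (by rw [he2]; norm_num), T_pow, ← T_add]
          norm_num
        have eS : μ (k-1) * μ k * LaurentPolynomial.C (T 1) * T (-1)
            = LaurentPolynomial.C (T 1) * T 1 := by
          rw [hμk, if_neg (by rw [he2]; norm_num), hμk1, if_neg (by rw [he1]; norm_num)]
          linear_combination (LaurentPolynomial.C (T 1) * T 1 : LaurentPolynomial (LaurentPolynomial ℚ)) * houter
        have hrec : ∀ d, lco (Cp k) d =
            lco (Cp (k-1)) (d-1) + T 1 * lco (Cp (k-1)) d - T 1 * lco (Cp (k-2)) (d-1) := by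
          intro d
          rw [hCk k (by omega), eT, eS]
          simp only [add_mul, lco_sub, lco_add, lco_T_mul, lco_C_mul, lco_CT_mul]
        refine ⟨fun d hd => ?_, ?_, fun _ => ?_⟩
        · rw [hrec d, v1 _ (by omega), v1 _ (by omega), v2 _ (by omega)]; ring
        · have hw2 : (T 1 : LaurentPolynomial ℚ) * T ((β (k-1) : ℕ):ℤ) = T ((β k : ℕ):ℤ) := by
            rw [← T_add]; congr 1; omega
          rw [hrec, v1 _ (by omega), v2 _ (by omega),
            show -((α k : ℕ):ℤ) = -((α (k-1) : ℕ):ℤ) by omega, a1, hw2]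
          ring
        · have e1 : lco (Cp (k-1)) (1 - ((α k : ℕ):ℤ) - 1) = T ((β (k-1) : ℕ):ℤ) := by
            rw [show 1 - ((α k : ℕ):ℤ) - 1 = -((α (k-1) : ℕ):ℤ) by omega]; exact a1
          have e2 : lco (Cp (k-1)) (1 - ((α k : ℕ):ℤ)) =
              ((A (k-1) : LaurentPolynomial ℚ) * T 1 - (γ (k-1) : LaurentPolynomial ℚ) +
               (B (k-1) : LaurentPolynomial ℚ) * T (-1)) * T ((β (k-1) : ℕ):ℤ) := by
            rw [show 1 - ((α k : ℕ):ℤ) = 1 - ((α (k-1) : ℕ):ℤ) by omega]; exact hb1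
          have e3 : lco (Cp (k-2)) (1 - ((α k : ℕ):ℤ) - 1) = T ((β (k-2) : ℕ):ℤ) := by
            rw [show 1 - ((α k : ℕ):ℤ) - 1 = -((α (k-2) : ℕ):ℤ) by omega]; exact a2
          have hw1 : (T 1 : LaurentPolynomial ℚ) * T ((β (k-2) : ℕ):ℤ) = T ((β (k-1) : ℕ):ℤ) := by
            rw [← T_add]; congr 1; omega
          have hw2 : (T 1 : LaurentPolynomial ℚ) * T ((β (k-1) : ℕ):ℤ) = T ((β k : ℕ):ℤ) := by
            rw [← T_add]; congr 1; omega
          rw [hrec, e1, e2, e3, hw1, hAk, hBk, hγk]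
          rw [show ((β k : ℕ):ℤ) = 1 + ((β (k-1) : ℕ):ℤ) by omega, T_add]
          ring

  intro k hk1 hkp c hrep
  have h : lco (Cp k) (1 - (α k : ℤ)) = c 1 := by
    rw [hrep, lco_sum]
    have : ∀ i ∈ Finset.range (k+1),
        lco (LaurentPolynomial.C (c i) * T ((i:ℤ) - (α k : ℤ))) (1 - (α k : ℤ))
          = if i = 1 then c i else 0 := by
      intro i _
      rw [lco_CT, if_congr (by omega : (1 - (α k:ℤ) = (i:ℤ) - (α k:ℤ)) ↔ i = 1) rfl rfl]
    rw [Finset.sum_congr rfl this, Finset.sum_ite_eq' (Finset.range (k+1)) 1 c,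
      if_pos (by simp; omega)]
  rw [← h, (key k hkp).2.2 hk1]
end
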